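/- Let X = ℚ ∩ [0,1] and let g ∈ F₀ with E₀(g, g) > 0. Then there exists no nonnegative measure Γ on X (with the σ-algebra of all subsets of the countable set X) such that for every ψ ∈ F₀ the restriction ψ|_X is Γ-integrable and 2 ∫_X ψ|_X dΓ = 2 E₀(ψg, g) − E₀(ψ, g²). In other words, the Dirichlet form obtained by restricting the classical Dirichlet integral on [0,1] to the countable state space ℚ ∩ [0,1] does not admit an energy measure for any function of positive energy. -/

import Mathlib

open MeasureTheory intervalIntegral

/-- Membership in `F₀`, the domain of the classical Dirichlet integral on `[0,1]`:
`g ∈ F₀` with (weak) derivative `h` iff `h ∈ L²([0,1])` and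
`g x = g 0 + ∫_0^x h(t) dt` for all `x ∈ [0,1]`.  For `g₁, g₂ ∈ F₀` with derivatives
`h₁, h₂`, the Dirichlet integral is `E₀(g₁, g₂) = ∫_0^1 h₁ h₂ dt`. -/
def MemF0 (g h : ℝ → ℝ) : Prop :=
  MemLp h 2 (volume.restrict (Set.Icc (0 : ℝ) 1)) ∧
    ∀ x ∈ Set.Icc (0 : ℝ) 1, g x = g 0 + ∫ t in (0 : ℝ)..x, h t

/-- The countable state space `X = ℚ ∩ [0,1]`. -/
def QI : Type := {q : ℚ // (q : ℝ) ∈ Set.Icc (0 : ℝ) 1}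

instance : Countable QI := by unfold QI; infer_instance

open Set Metric Filter Topology
set_option maxHeartbeats 1000000

lemma interval01_eq (f : ℝ → ℝ) :
    (∫ t in (0:ℝ)..1, f t) = ∫ t, f t ∂(volume.restrict (Set.Icc (0:ℝ) 1)) := by
  rw [intervalIntegral.integral_of_le zero_le_one,
    ← MeasureTheory.integral_Icc_eq_integral_Ioc]

lemma g_props (g h : ℝ → ℝ) (hg : MemF0 g h) :
    ContinuousOn g (Set.Icc (0:ℝ) 1) := by
  have hI : IntegrableOn h (Set.Icc (0:ℝ) 1) volume := hg.1.integrable one_le_two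
  have hconG : ContinuousOn (fun x => g 0 + ∫ t in (0:ℝ)..x, h t) (Set.Icc (0:ℝ) 1) := by
    apply ContinuousOn.add continuousOn_const
    have := continuousOn_primitive_interval (a := (0:ℝ)) (b := 1) (μ := volume)
      (by simpa [Set.uIcc_of_le (zero_le_one' ℝ)] using hI)
    simpa [Set.uIcc_of_le (zero_le_one' ℝ)] using this
  exact hconG.congr hg.2

lemma key_identity (g h ψ k : ℝ → ℝ) (hg : MemF0 g h)
    (hψm : AEStronglyMeasurable ψ (volume.restrict (Set.Icc (0:ℝ) 1)))
    (hψb : ∃ C, ∀ x ∈ Set.Icc (0:ℝ) 1, |ψ x| ≤ C)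
    (hkm : AEStronglyMeasurable k (volume.restrict (Set.Icc (0:ℝ) 1)))
    (hkb : ∃ C, ∀ x ∈ Set.Icc (0:ℝ) 1, |k x| ≤ C) :
    2 * (∫ t in (0:ℝ)..1, (k t * g t + ψ t * h t) * h t)
      - (∫ t in (0:ℝ)..1, k t * (2 * g t * h t))
    = 2 * ∫ t in (0:ℝ)..1, ψ t * h t ^ 2 := by
  set μ := volume.restrict (Set.Icc (0:ℝ) 1) with hμ
  have hgc : ContinuousOn g (Set.Icc (0:ℝ) 1) := g_props g h hg
  have hgm : AEStronglyMeasurable g μ := hgc.aestronglyMeasurable measurableSet_Icc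
  obtain ⟨Cg, hCg⟩ := isCompact_Icc.exists_bound_of_continuousOn hgc
  obtain ⟨Ck, hCk⟩ := hkb
  have hae : ∀ᵐ x ∂μ, x ∈ Set.Icc (0:ℝ) 1 := ae_restrict_mem measurableSet_Icc
  have hh1 : Integrable h μ := hg.1.integrable one_le_two
  have hh2 : Integrable (fun t => h t ^ 2) μ := hg.1.integrable_sq
  have hkgh : Integrable (fun t => k t * g t * h t) μ := by
    apply Integrable.bdd_mul (c := Ck * Cg) hh1 (hkm.mul hgm)
    filter_upwards [hae] with x hx
    have h1 : |k x| ≤ Ck := hCk x hx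
    have h2 : ‖g x‖ ≤ Cg := hCg x hx
    have h0 : (0:ℝ) ≤ |k x| := abs_nonneg _
    calc ‖k x * g x‖ = |k x| * ‖g x‖ := by rw [norm_mul]; rfl
    _ ≤ Ck * Cg := mul_le_mul h1 h2 (norm_nonneg _) (h0.trans h1)
  have hψhh : Integrable (fun t => ψ t * h t ^ 2) μ := by
    obtain ⟨Cψ, hCψ⟩ := hψb
    apply Integrable.bdd_mul (c := Cψ) hh2 hψm
    filter_upwards [hae] with x hx
    simpa using hCψ x hx
  rw [interval01_eq, interval01_eq, interval01_eq, ← hμ]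
  have e1 : (∫ t, (k t * g t + ψ t * h t) * h t ∂μ)
      = (∫ t, (k t * g t * h t + ψ t * h t ^ 2) ∂μ) := by
    apply MeasureTheory.integral_congr_ae; filter_upwards with x; ring
  rw [e1, integral_add hkgh hψhh]
  have e2 : (∫ t, k t * (2 * g t * h t) ∂μ) = 2 * ∫ t, k t * g t * h t ∂μ := by
    rw [← MeasureTheory.integral_const_mul]
    apply MeasureTheory.integral_congr_ae; filter_upwards with x; ring
  rw [e2]; ring


/-- Let `X = ℚ ∩ [0,1]` and let `g ∈ F₀` (with derivative `h`) have
positive energy `E₀(g, g) = ∫_0^1 h² dt > 0`.  Then there is no nonnegative measure `Γ`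
on `X` (with the σ-algebra of all subsets of the countable set `X`) such that for every
`ψ ∈ F₀` (with derivative `k`) the restriction `ψ|_X` is `Γ`-integrable and
`2 ∫_X ψ|_X dΓ = 2 E₀(ψ g, g) − E₀(ψ, g²)`, where `(ψ g)' = k g + ψ h` and
`(g²)' = 2 g h`: the restricted Dirichlet form admits no energy measure for any function
of positive energy. -/
theorem no_energy_measure_on_rationals (g h : ℝ → ℝ) (hg : MemF0 g h)
    (hpos : 0 < ∫ t in (0 : ℝ)..1, h t ^ 2) :
    ¬ ∃ Γ : @Measure QI ⊤, ∀ ψ k : ℝ → ℝ, MemF0 ψ k →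
        Integrable (fun q : QI => ψ (q.1 : ℝ)) Γ ∧
        2 * ∫ q : QI, ψ (q.1 : ℝ) ∂Γ =
          2 * (∫ t in (0 : ℝ)..1, (k t * g t + ψ t * h t) * h t) -
            ∫ t in (0 : ℝ)..1, k t * (2 * g t * h t) := by
  letI : MeasurableSpace QI := ⊤
  letI : MeasurableSingletonClass QI := ⟨fun _ => trivial⟩
  rintro ⟨Γ, hΓ⟩
  set μ := volume.restrict (Set.Icc (0:ℝ) 1) with hμ
  -- Step 1: apply to ψ = 1
  have hone : MemF0 (fun _ => (1:ℝ)) (fun _ => (0:ℝ)) := by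
    constructor
    · simpa using memLp_const (0:ℝ) (μ := μ) (p := 2)
    · intro x hx; simp
  obtain ⟨hint1, heq1⟩ := hΓ _ _ hone
  have hk1 : (2 * (∫ t in (0:ℝ)..1, ((0:ℝ) * g t + 1 * h t) * h t)
      - (∫ t in (0:ℝ)..1, (0:ℝ) * (2 * g t * h t)))
      = 2 * ∫ t in (0:ℝ)..1, (1:ℝ) * h t ^ 2 := by
    exact key_identity g h (fun _ => 1) (fun _ => 0) hg
      aestronglyMeasurable_const ⟨1, fun x _ => by simp⟩
      aestronglyMeasurable_const ⟨1, fun x _ => by simp⟩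
  rw [hk1] at heq1
  simp only [one_mul] at heq1
  have hΓuniv : (Γ Set.univ).toReal = ∫ t in (0:ℝ)..1, h t ^ 2 := by
    have := heq1
    rw [MeasureTheory.integral_const] at this
    simp only [smul_eq_mul, mul_one] at this
    change 2 * (Γ Set.univ).toReal = _ at this
    linarith
  have hΓpos : 0 < (Γ Set.univ).toReal := hΓuniv ▸ hpos
  have hΓne : Γ Set.univ ≠ ⊤ := by
    intro hc; rw [hc] at hΓpos; simp at hΓpos
  -- Step 2: find an atom
  have hexq : ∃ q₀ : QI, Γ {q₀} ≠ 0 := by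
    by_contra hc
    push_neg at hc
    have := Measure.tsum_indicator_apply_singleton Γ Set.univ MeasurableSet.univ
    simp only [Set.indicator_univ, hc, tsum_zero] at this
    rw [← this] at hΓpos; simp at hΓpos
  obtain ⟨q₀, hq₀⟩ := hexq
  have hq₀top : Γ {q₀} ≠ ⊤ := fun hc =>
    hΓne (top_le_iff.mp (hc ▸ measure_mono (Set.subset_univ _)))
  set c := (Γ {q₀}).toReal with hc
  have hcpos : 0 < c := ENNReal.toReal_pos hq₀ hq₀top
  set r := ((q₀.1 : ℚ) : ℝ) with hr
  -- Step 3: small interval with small energy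
  have hh2 : Integrable (fun t => h t ^ 2) μ := hg.1.integrable_sq
  have htend : Tendsto (fun n : ℕ => ∫ t in closedBall r (1/(n+1)), h t ^ 2 ∂μ)
      atTop (𝓝 (∫ t in ⋂ n : ℕ, closedBall r (1/(n+1)), h t ^ 2 ∂μ)) := by
    apply tendsto_setIntegral_of_antitone (fun n => measurableSet_closedBall)
    · intro m n hmn
      apply closedBall_subset_closedBall
      apply one_div_le_one_div_of_le (by positivity)
      exact_mod_cast by omega
    · exact ⟨0, hh2.integrableOn⟩
  have hInter : (⋂ n : ℕ, closedBall r (1/(n+1))) = {r} := by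
    ext x
    simp only [Set.mem_iInter, mem_closedBall, Set.mem_singleton_iff]
    constructor
    · intro hx
      have h0 : dist x r ≤ 0 := by
        by_contra hd
        push_neg at hd
        obtain ⟨n, hn⟩ := exists_nat_one_div_lt hd
        have := hx n
        linarith
      exact dist_le_zero.mp h0
    · rintro rfl; intro n
      simp only [dist_self]
      positivity
  have hzero : (∫ t in ⋂ n : ℕ, closedBall r (1/(n+1)), h t ^ 2 ∂μ) = 0 := by
    rw [hInter]
    have hz : μ ({r} : Set ℝ) = 0 := by
      refine le_antisymm ?_ zero_le
      calc μ {r} ≤ volume {r} := Measure.restrict_le_self _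
      _ = 0 := Real.volume_singleton
    rw [Measure.restrict_eq_zero.mpr hz]
    exact integral_zero_measure _
  rw [hzero] at htend
  have hev : ∃ n : ℕ, (∫ t in closedBall r (1/(n+1)), h t ^ 2 ∂μ) < c := by
    have := (htend.eventually (eventually_lt_nhds hcpos)).exists
    exact this
  obtain ⟨n, hn⟩ := hev
  set ε : ℝ := 1/(n+1) with hε
  have hεpos : 0 < ε := by positivity
  -- Step 4: the bump function
  obtain ⟨f, hfr⟩ : ∃ f : ContDiffBump r, f.rOut = ε :=
    ⟨⟨ε/2, ε, by positivity, by linarith⟩, rfl⟩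
  have hfdiff : ∀ x, DifferentiableAt ℝ f x :=
    fun x => (f.contDiff (n := 1)).differentiable one_ne_zero |>.differentiableAt
  have hfd : Continuous (deriv f) := (f.contDiff (n := 2)).continuous_deriv one_le_two
  have hmemf : MemF0 f (deriv f) := by
    constructor
    · obtain ⟨C, hC⟩ := isCompact_Icc.exists_bound_of_continuousOn
        (hfd.continuousOn (s := Set.Icc (0:ℝ) 1))
      exact MemLp.of_bound (hfd.aestronglyMeasurable.restrict) C
        (by filter_upwards [ae_restrict_mem measurableSet_Icc] with x hx using hC x hx)
    · intro x hx
      have := intervalIntegral.integral_deriv_eq_sub (a := 0) (b := x) (f := f)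
        (fun y _ => hfdiff y) (hfd.intervalIntegrable 0 x)
      rw [this]; ring
  obtain ⟨hint2, heq2⟩ := hΓ _ _ hmemf
  have hk2 : (2 * (∫ t in (0:ℝ)..1, (deriv f t * g t + f t * h t) * h t)
      - (∫ t in (0:ℝ)..1, deriv f t * (2 * g t * h t)))
      = 2 * ∫ t in (0:ℝ)..1, f t * h t ^ 2 := by
    apply key_identity g h f (deriv f) hg
      (f.continuous.aestronglyMeasurable.restrict)
      ⟨1, fun x _ => by rw [abs_of_nonneg f.nonneg]; exact f.le_one⟩
      (hfd.aestronglyMeasurable.restrict)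
      ?_
    obtain ⟨C, hC⟩ := isCompact_Icc.exists_bound_of_continuousOn
      (hfd.continuousOn (s := Set.Icc (0:ℝ) 1))
    exact ⟨C, fun x hx => hC x hx⟩
  rw [hk2] at heq2
  have heq3 : (∫ q : QI, f (q.1 : ℝ) ∂Γ) = ∫ t in (0:ℝ)..1, f t * h t ^ 2 := by
    linarith
  -- lower bound on the Γ side
  have hlow : c ≤ ∫ q : QI, f (q.1 : ℝ) ∂Γ := by
    have h1 : (∫ q in ({q₀} : Set QI), f (q.1 : ℝ) ∂Γ) ≤ ∫ q : QI, f (q.1 : ℝ) ∂Γ :=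
      setIntegral_le_integral hint2 (Filter.Eventually.of_forall fun q => f.nonneg)
    have h2 : (∫ q in ({q₀} : Set QI), f (q.1 : ℝ) ∂Γ) = c := by
      rw [integral_singleton]
      have : f ((q₀.1 : ℚ) : ℝ) = 1 :=
        f.one_of_mem_closedBall (by
          rw [← hr]
          simp only [mem_closedBall, dist_self]
          exact f.rIn_pos.le)
      rw [← hr] at this ⊢
      rw [this]; simp [hc]; rfl
    linarith
  -- upper bound on the energy side
  have hup : (∫ t in (0:ℝ)..1, f t * h t ^ 2) < c := by
    rw [interval01_eq, ← hμ]
    have h1 : (∫ t, f t * h t ^ 2 ∂μ)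
        ≤ ∫ t, (closedBall r ε).indicator (fun t => h t ^ 2) t ∂μ := by
      apply integral_mono_of_nonneg
      · exact Filter.Eventually.of_forall fun t => mul_nonneg f.nonneg (sq_nonneg _)
      · exact hh2.indicator measurableSet_closedBall
      · apply Filter.Eventually.of_forall
        intro t
        dsimp only
        by_cases ht : t ∈ closedBall r ε
        · rw [Set.indicator_of_mem ht]
          calc f t * h t ^ 2 ≤ 1 * h t ^ 2 :=
                mul_le_mul_of_nonneg_right f.le_one (sq_nonneg _)
          _ = h t ^ 2 := one_mul _
        · rw [Set.indicator_of_notMem ht]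
          have : f t = 0 := f.zero_of_le_dist (by
            rw [hfr]
            simp only [mem_closedBall, not_le] at ht; exact le_of_lt ht)
          simp [this]
    have h2 : (∫ t, (closedBall r ε).indicator (fun t => h t ^ 2) t ∂μ)
        = ∫ t in closedBall r ε, h t ^ 2 ∂μ :=
      MeasureTheory.integral_indicator measurableSet_closedBall
    linarith
  rw [heq3] at hlow
  exact absurd (lt_of_le_of_lt hlow hup) (lt_irrefl _)
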